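/- For any integers 0 ≤ l ≤ m, the number of binary 1-digits needed to write the integers m, m+1, ..., m+l-1 is at most l more than the number of binary 1-digits needed to write m-l, ..., m-1. Equivalently, S_0(m+l) + S_0(m-l) - 2 S_0(m) ≤ l. -/

import Mathlib

open Finset

/-- Weighted binary digit sum: `s_p(n) = ∑_j 2^{pj} ε_j(n)`. -/
noncomputable def sWeight (p : ℝ) (n : ℕ) : ℝ :=
  ∑ j ∈ Finset.range n, if n.testBit j then (2:ℝ) ^ (p * (j:ℝ)) else 0

/-- `S_p(n) = ∑_{m=0}^{n-1} s_p(m)`. -/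
noncomputable def SWeight (p : ℝ) (n : ℕ) : ℝ :=
  ∑ m ∈ Finset.range n, sWeight p m


open Finset

private def sN (n : ℕ) : ℕ := ∑ j ∈ Finset.range n, if n.testBit j then 1 else 0

private lemma sN_eq (n N : ℕ) (h : n ≤ N) :
    sN n = ∑ j ∈ Finset.range N, (if n.testBit j then 1 else 0) := by
  unfold sN
  apply Finset.sum_subset (Finset.range_subset_range.2 h)
  intro j hj hj'
  simp only [Finset.mem_range, not_lt] at hj'
  rw [Nat.testBit_lt_two_pow
    (lt_of_lt_of_le (Nat.lt_two_pow_self (n := n)) (Nat.pow_le_pow_right (by norm_num) hj'))]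
  simp

private lemma sN_two_mul (n : ℕ) : sN (2 * n) = sN n := by
  rw [sN_eq (2*n) (2*n+1) (by omega), sN_eq n (2*n) (by omega),
    Finset.sum_range_succ']
  simp [Nat.testBit_succ, Nat.testBit_zero, Nat.mul_div_cancel_left n (by norm_num : (0:ℕ) < 2),
    Nat.mul_mod_right]

private lemma sN_two_mul_add_one (n : ℕ) : sN (2 * n + 1) = sN n + 1 := by
  rw [sN_eq (2*n+1) ((2*n)+1) (by omega), sN_eq n (2*n) (by omega),
    Finset.sum_range_succ']
  have h2 : (2*n+1) / 2 = n := by omega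
  have h3 : (2*n+1) % 2 = 1 := by omega
  simp [Nat.testBit_succ, Nat.testBit_zero, h2, h3]

private def SN (n : ℕ) : ℕ := ∑ m ∈ Finset.range n, sN m

private lemma SN_succ (n : ℕ) : SN (n + 1) = SN n + sN n := Finset.sum_range_succ _ n

private lemma SN_two_mul (n : ℕ) : SN (2 * n) = 2 * SN n + n := by
  induction n with
  | zero => simp [SN]
  | succ k ih =>
    have h1 : 2 * (k + 1) = (2 * k + 1) + 1 := by ring
    rw [h1, SN_succ, show 2*k+1 = 2*k+1 from rfl, SN_succ, ih, sN_two_mul,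
      sN_two_mul_add_one, SN_succ]
    ring

private lemma SN_two_mul_add_one (n : ℕ) : SN (2 * n + 1) = 2 * SN n + n + sN n := by
  rw [SN_succ, SN_two_mul, sN_two_mul]

private lemma main_ind : ∀ N : ℕ,
    (∀ m l, 2 * m = N → l ≤ m → SN (m + l) + SN (m - l) ≤ 2 * SN m + l) ∧
    (∀ a b, 2 * a + 1 = N → b ≤ a → SN (a + b + 1) + SN (a - b) ≤ SN a + SN (a + 1) + b) := by
  intro N
  induction N using Nat.strong_induction_on with
  | _ N ih =>
  constructor
  · intro m l hN hlm
    rcases Nat.eq_zero_or_pos l with rfl | hl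
    · simp only [Nat.add_zero, Nat.sub_zero]
      omega
    obtain ⟨a, ha⟩ : ∃ a, m = 2*a ∨ m = 2*a+1 := ⟨m/2, by omega⟩
    obtain ⟨b, hb⟩ : ∃ b, l = 2*b ∨ l = 2*b+1 := ⟨l/2, by omega⟩
    rcases ha with rfl | rfl <;> rcases hb with rfl | rfl
    · -- m = 2a, l = 2b
      have ihG := (ih (2*a) (by omega)).1 a b rfl (by omega)
      have e1 : SN (2*a + 2*b) = 2 * SN (a+b) + (a+b) := by
        rw [show 2*a+2*b = 2*(a+b) by ring, SN_two_mul]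
      have e2 : SN (2*a - 2*b) = 2 * SN (a-b) + (a-b) := by
        rw [show 2*a-2*b = 2*(a-b) by omega, SN_two_mul]
      have e3 : SN (2*a) = 2 * SN a + a := SN_two_mul a
      omega
    · -- m = 2a, l = 2b+1
      have ihG1 := (ih (2*a) (by omega)).1 a b rfl (by omega)
      have ihG2 := (ih (2*a) (by omega)).1 a (b+1) rfl (by omega)
      rw [show a+(b+1) = a+b+1 by ring, show a-(b+1) = a-b-1 by omega] at ihG2
      have e1 : SN (2*a + (2*b+1)) = 2 * SN (a+b) + (a+b) + sN (a+b) := by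
        rw [show 2*a+(2*b+1) = 2*(a+b)+1 by ring, SN_two_mul_add_one]
      have e2 : SN (2*a - (2*b+1)) = 2 * SN (a-b-1) + (a-b-1) + sN (a-b-1) := by
        rw [show 2*a-(2*b+1) = 2*(a-b-1)+1 by omega, SN_two_mul_add_one]
      have e3 : SN (2*a) = 2 * SN a + a := SN_two_mul a
      have e4 : SN (a+b+1) = SN (a+b) + sN (a+b) := SN_succ _
      have e5 : SN (a-b) = SN (a-b-1) + sN (a-b-1) := by
        have h := SN_succ (a-b-1); rwa [show (a-b-1)+1 = a-b by omega] at h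
      omega
    · -- m = 2a+1, l = 2b
      have ihG1 := (ih (2*a) (by omega)).1 a b rfl (by omega)
      have ihG2 := (ih (2*(a+1)) (by omega)).1 (a+1) b rfl (by omega)
      rw [show a+1+b = (a+b)+1 by ring, show a+1-b = (a-b)+1 by omega, SN_succ, SN_succ,
        SN_succ] at ihG2
      have e1 : SN (2*a+1 + 2*b) = 2 * SN (a+b) + (a+b) + sN (a+b) := by
        rw [show 2*a+1+2*b = 2*(a+b)+1 by ring, SN_two_mul_add_one]
      have e2 : SN (2*a+1 - 2*b) = 2 * SN (a-b) + (a-b) + sN (a-b) := by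
        rw [show 2*a+1-2*b = 2*(a-b)+1 by omega, SN_two_mul_add_one]
      have e3 : SN (2*a+1) = 2 * SN a + a + sN a := SN_two_mul_add_one a
      omega
    · -- m = 2a+1, l = 2b+1
      have ihH := (ih (2*a+1) (by omega)).2 a b rfl (by omega)
      have e1 : SN (2*a+1 + (2*b+1)) = 2 * SN (a+b+1) + (a+b+1) := by
        rw [show 2*a+1+(2*b+1) = 2*(a+b+1) by ring, SN_two_mul]
      have e2 : SN (2*a+1 - (2*b+1)) = 2 * SN (a-b) + (a-b) := by
        rw [show 2*a+1-(2*b+1) = 2*(a-b) by omega, SN_two_mul]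
      have e3 : SN (2*a+1) = 2 * SN a + a + sN a := SN_two_mul_add_one a
      have e4 : SN (a+1) = SN a + sN a := SN_succ a
      omega
  · intro a b hN hba
    rcases Nat.eq_zero_or_pos a with rfl | ha0
    · have : b = 0 := by omega
      subst this
      simp only [Nat.zero_add, Nat.sub_zero, Nat.add_zero]
      omega
    obtain ⟨c, hc⟩ : ∃ c, a = 2*c ∨ a = 2*c+1 := ⟨a/2, by omega⟩
    obtain ⟨d, hd⟩ : ∃ d, b = 2*d ∨ b = 2*d+1 := ⟨b/2, by omega⟩
    rcases hc with rfl | rfl <;> rcases hd with rfl | rfl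
    · -- a = 2c, b = 2d
      have ihG := (ih (2*c) (by omega)).1 c d rfl (by omega)
      have ihH := (ih (2*c+1) (by omega)).2 c d rfl (by omega)
      have e1 : SN (2*c + 2*d + 1) = 2 * SN (c+d) + (c+d) + sN (c+d) := by
        rw [show 2*c+2*d+1 = 2*(c+d)+1 by ring, SN_two_mul_add_one]
      have e2 : SN (2*c - 2*d) = 2 * SN (c-d) + (c-d) := by
        rw [show 2*c-2*d = 2*(c-d) by omega, SN_two_mul]
      have e3 : SN (2*c) = 2 * SN c + c := SN_two_mul c
      have e4 : SN (2*c+1) = 2 * SN c + c + sN c := SN_two_mul_add_one c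
      have e5 : SN (c+d+1) = SN (c+d) + sN (c+d) := SN_succ _
      have e6 : SN (c+1) = SN c + sN c := SN_succ c
      omega
    · -- a = 2c, b = 2d+1
      have ihG := (ih (2*c) (by omega)).1 c (d+1) rfl (by omega)
      rw [show c+(d+1) = c+d+1 by ring, show c-(d+1) = c-d-1 by omega] at ihG
      have ihH := (ih (2*c+1) (by omega)).2 c d rfl (by omega)
      have e1 : SN (2*c + (2*d+1) + 1) = 2 * SN (c+d+1) + (c+d+1) := by
        rw [show 2*c+(2*d+1)+1 = 2*(c+d+1) by ring, SN_two_mul]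
      have e2 : SN (2*c - (2*d+1)) = 2 * SN (c-d-1) + (c-d-1) + sN (c-d-1) := by
        rw [show 2*c-(2*d+1) = 2*(c-d-1)+1 by omega, SN_two_mul_add_one]
      have e3 : SN (2*c) = 2 * SN c + c := SN_two_mul c
      have e4 : SN (2*c+1) = 2 * SN c + c + sN c := SN_two_mul_add_one c
      have e5 : SN (c-d) = SN (c-d-1) + sN (c-d-1) := by
        have h := SN_succ (c-d-1); rwa [show (c-d-1)+1 = c-d by omega] at h
      have e6 : SN (c+1) = SN c + sN c := SN_succ c
      omega
    · -- a = 2c+1, b = 2d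
      have ihH := (ih (2*c+1) (by omega)).2 c d rfl (by omega)
      have ihG := (ih (2*(c+1)) (by omega)).1 (c+1) d rfl (by omega)
      rw [show c+1+d = (c+d)+1 by ring, show c+1-d = (c-d)+1 by omega, SN_succ, SN_succ] at ihG
      have e1 : SN (2*c+1 + 2*d + 1) = 2 * SN (c+d+1) + (c+d+1) := by
        rw [show 2*c+1+2*d+1 = 2*(c+d+1) by ring, SN_two_mul]
      have e2 : SN (2*c+1 - 2*d) = 2 * SN (c-d) + (c-d) + sN (c-d) := by
        rw [show 2*c+1-2*d = 2*(c-d)+1 by omega, SN_two_mul_add_one]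
      have e3 : SN (2*c+1) = 2 * SN c + c + sN c := SN_two_mul_add_one c
      have e4 : SN (2*c+1+1) = 2 * SN (c+1) + (c+1) := by
        rw [show 2*c+1+1 = 2*(c+1) by ring, SN_two_mul]
      have e5 : SN (c+1) = SN c + sN c := SN_succ c
      have e6 : SN (c+d+1) = SN (c+d) + sN (c+d) := SN_succ _
      omega
    · -- a = 2c+1, b = 2d+1
      have ihH := (ih (2*c+1) (by omega)).2 c d rfl (by omega)
      have ihG := (ih (2*(c+1)) (by omega)).1 (c+1) (d+1) rfl (by omega)
      rw [show c+1+(d+1) = (c+d+1)+1 by ring, show c+1-(d+1) = c-d by omega, SN_succ] at ihG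
      have e1 : SN (2*c+1 + (2*d+1) + 1) = 2 * SN (c+d+1) + (c+d+1) + sN (c+d+1) := by
        rw [show 2*c+1+(2*d+1)+1 = 2*(c+d+1)+1 by ring, SN_two_mul_add_one]
      have e2 : SN (2*c+1 - (2*d+1)) = 2 * SN (c-d) + (c-d) := by
        rw [show 2*c+1-(2*d+1) = 2*(c-d) by omega, SN_two_mul]
      have e3 : SN (2*c+1) = 2 * SN c + c + sN c := SN_two_mul_add_one c
      have e4 : SN (2*c+1+1) = 2 * SN (c+1) + (c+1) := by
        rw [show 2*c+1+1 = 2*(c+1) by ring, SN_two_mul]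
      have e5 : SN (c+1) = SN c + sN c := SN_succ c
      omega

private lemma sWeight_zero_eq (n : ℕ) : sWeight 0 n = (sN n : ℝ) := by
  rw [sWeight, sN, Nat.cast_sum]
  refine Finset.sum_congr rfl fun j _ => ?_
  split <;> simp

private lemma SWeight_zero_eq (n : ℕ) : SWeight 0 n = (SN n : ℝ) := by
  rw [SWeight, SN, Nat.cast_sum]
  exact Finset.sum_congr rfl fun k _ => sWeight_zero_eq k

theorem SWeight_zero_midpoint_ineq (m l : ℕ) (hlm : l ≤ m) :
    SWeight 0 (m + l) + SWeight 0 (m - l) - 2 * SWeight 0 m ≤ (l:ℝ) := by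
  have key := (main_ind (2*m)).1 m l rfl hlm
  rw [SWeight_zero_eq, SWeight_zero_eq, SWeight_zero_eq]
  have h : ((SN (m+l) : ℝ)) + (SN (m-l) : ℝ) ≤ 2 * (SN m : ℝ) + l := by exact_mod_cast key
  linarith
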